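/- arXiv:math/9904107 — 4 statements merged into one kernel-verified Lean document; each statement's English description precedes it below -/
import Mathlib

section
/- For every n ≥ 1, the number of signed permutations of [n] avoiding the patterns 21 and 2̄1̄ is the central binomial coefficient C(2n,n); that is, |B_n(21, 2̄1̄)| = C(2n,n). -/
open Finset

section Aux
variable {n : ℕ}

/-- positions where `f` takes value `bv` -/
def bset (f : Fin n → Bool) (bv : Bool) : Finset (Fin n) :=
  univ.filter (fun i => f i = bv)

lemma mem_bset {f : Fin n → Bool} {bv : Bool} {i : Fin n} : i ∈ bset f bv ↔ f i = bv := by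
  simp [bset]

lemma bset_card_eq (f g : Fin n → Bool) (σ : Equiv.Perm (Fin n))
    (hσ : ∀ i, g (σ i) = f i) (bv : Bool) :
    (bset g bv).card = (bset f bv).card := by
  have hmap : bset g bv = (bset f bv).map σ.toEmbedding := by
    ext x
    simp only [mem_bset, Finset.mem_map, Equiv.coe_toEmbedding]
    constructor
    · intro hx
      refine ⟨σ.symm x, ?_, σ.apply_symm_apply x⟩
      have h2 := hσ (σ.symm x)
      rw [σ.apply_symm_apply] at h2
      rw [← h2]; exact hx
    · rintro ⟨i, hi, rfl⟩
      rw [hσ, hi]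
  rw [hmap, Finset.card_map]

lemma bset_card_add (f : Fin n → Bool) :
    (bset f true).card + (bset f false).card = n := by
  classical
  have h1 : bset f false = univ.filter (fun i => ¬ f i = true) := by
    ext i; simp [bset]
  rw [bset, h1, Finset.card_filter_add_card_filter_not, Finset.card_univ,
    Fintype.card_fin]

noncomputable def classEquiv (f g : Fin n → Bool) (bv : Bool)
    (h : (bset g bv).card = (bset f bv).card) :
    {i : Fin n // f i = bv} ≃ {i : Fin n // g i = bv} :=
  (((Equiv.subtypeEquivRight (fun _ => mem_bset)).symm.trans
    ((bset f bv).orderIsoOfFin rfl).symm.toEquiv).trans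
    ((bset g bv).orderIsoOfFin h).toEquiv).trans
    (Equiv.subtypeEquivRight (fun _ => mem_bset))

lemma classEquiv_strictMono (f g : Fin n → Bool) (bv : Bool)
    (h : (bset g bv).card = (bset f bv).card) {a b : {i : Fin n // f i = bv}}
    (hab : (a : Fin n) < b) :
    (classEquiv f g bv h a : Fin n) < (classEquiv f g bv h b : Fin n) := by
  have h3 : ((bset g bv).orderIsoOfFin h) (((bset f bv).orderIsoOfFin rfl).symm
        ⟨(a : Fin n), mem_bset.mpr a.2⟩) <
      ((bset g bv).orderIsoOfFin h) (((bset f bv).orderIsoOfFin rfl).symm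
        ⟨(b : Fin n), mem_bset.mpr b.2⟩) := by
    rw [OrderIso.lt_iff_lt, OrderIso.lt_iff_lt]
    exact Subtype.mk_lt_mk.mpr hab
  exact h3

noncomputable def permOf (f g : Fin n → Bool)
    (hT : (bset g true).card = (bset f true).card)
    (hF : (bset g false).card = (bset f false).card) : Equiv.Perm (Fin n) where
  toFun i := if h : f i = true then (classEquiv f g true hT ⟨i, h⟩ : Fin n)
    else (classEquiv f g false hF ⟨i, by simpa using h⟩ : Fin n)
  invFun j := if h : g j = true then ((classEquiv f g true hT).symm ⟨j, h⟩ : Fin n)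
    else ((classEquiv f g false hF).symm ⟨j, by simpa using h⟩ : Fin n)
  left_inv i := by
    by_cases h : f i = true
    · simp only [h, dite_true]
      have h2 := (classEquiv f g true hT ⟨i, h⟩).2
      simp only [h2, dite_true, Subtype.coe_eta, Equiv.symm_apply_apply]
    · simp only [h, dite_false]
      have h2 := (classEquiv f g false hF ⟨i, by simpa using h⟩).2
      simp only [h2, Bool.false_eq_true, dite_false, Subtype.coe_eta,
        Equiv.symm_apply_apply]
  right_inv j := by
    by_cases h : g j = true
    · simp only [h, dite_true]
      have h2 := ((classEquiv f g true hT).symm ⟨j, h⟩).2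
      simp only [h2, dite_true, Subtype.coe_eta, Equiv.apply_symm_apply]
    · simp only [h, dite_false]
      have h2 := ((classEquiv f g false hF).symm ⟨j, by simpa using h⟩).2
      simp only [h2, Bool.false_eq_true, dite_false, Subtype.coe_eta,
        Equiv.apply_symm_apply]

lemma permOf_apply_pos (f g : Fin n → Bool) (hT hF) {i : Fin n} (h : f i = true) :
    permOf f g hT hF i = (classEquiv f g true hT ⟨i, h⟩ : Fin n) := dif_pos h

lemma permOf_apply_neg (f g : Fin n → Bool) (hT hF) {i : Fin n} (h : f i = false) :
    permOf f g hT hF i = (classEquiv f g false hF ⟨i, h⟩ : Fin n) :=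
  dif_neg (by simp [h])

lemma permOf_bool (f g : Fin n → Bool) (hT hF) (i : Fin n) :
    g (permOf f g hT hF i) = f i := by
  by_cases h : f i = true
  · rw [permOf_apply_pos f g hT hF h, (classEquiv f g true hT ⟨i, h⟩).2, h]
  · have h' : f i = false := (Bool.not_eq_true _).mp h
    rw [permOf_apply_neg f g hT hF h', (classEquiv f g false hF ⟨i, h'⟩).2, h']

lemma permOf_mono (f g : Fin n → Bool) (hT hF) {i j : Fin n}
    (hij : i < j) (hfij : f i = f j) : permOf f g hT hF i < permOf f g hT hF j := by
  by_cases h : f i = true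
  · have h' : f j = true := hfij ▸ h
    rw [permOf_apply_pos f g hT hF h, permOf_apply_pos f g hT hF h']
    exact classEquiv_strictMono f g true hT hij
  · have h2 : f i = false := (Bool.not_eq_true _).mp h
    have h2' : f j = false := hfij ▸ h2
    rw [permOf_apply_neg f g hT hF h2, permOf_apply_neg f g hT hF h2']
    exact classEquiv_strictMono f g false hF hij

lemma perm_uniq (f g : Fin n → Bool) (σ τ : Equiv.Perm (Fin n))
    (hσ : ∀ i, g (σ i) = f i) (hτ : ∀ i, g (τ i) = f i)
    (mσ : ∀ i j : Fin n, i < j → f i = f j → σ i < σ j)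
    (mτ : ∀ i j : Fin n, i < j → f i = f j → τ i < τ j) : σ = τ := by
  have key : ∀ ρ : Equiv.Perm (Fin n), ∀ hρ : ∀ i, g (ρ i) = f i,
      (∀ i j : Fin n, i < j → f i = f j → ρ i < ρ j) →
      ∀ (bv : Bool) (j : Fin (bset f bv).card),
        ρ ((bset f bv).orderEmbOfFin rfl j) =
          (bset g bv).orderEmbOfFin (bset_card_eq f g ρ hρ bv) j := by
    intro ρ hρ mρ bv
    have hmono : StrictMono (fun j => ρ ((bset f bv).orderEmbOfFin rfl j)) := by
      intro a b hab
      refine mρ _ _ (((bset f bv).orderEmbOfFin rfl).lt_iff_lt.mpr hab) ?_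
      rw [mem_bset.mp (Finset.orderEmbOfFin_mem (bset f bv) rfl a),
        mem_bset.mp (Finset.orderEmbOfFin_mem (bset f bv) rfl b)]
    have hmem : ∀ j, ρ ((bset f bv).orderEmbOfFin rfl j) ∈ bset g bv := by
      intro j
      rw [mem_bset, hρ, mem_bset.mp (Finset.orderEmbOfFin_mem (bset f bv) rfl j)]
    have := Finset.orderEmbOfFin_unique (bset_card_eq f g ρ hρ bv) hmem hmono
    exact fun j => congrFun this j
  apply Equiv.ext
  intro i
  set bv := f i with hbv
  have hi : i ∈ bset f bv := mem_bset.mpr rfl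
  obtain ⟨j, hj⟩ : ∃ j, (bset f bv).orderEmbOfFin rfl j = i := by
    have : i ∈ Set.range ((bset f bv).orderEmbOfFin rfl) := by
      rw [Finset.range_orderEmbOfFin]; exact_mod_cast hi
    exact this
  rw [← hj, key σ hσ mσ bv j, key τ hτ mτ bv j]

end Aux
/-- A signed permutation of `[n]`: an underlying (absolute-value) permutation
`perm` of `Fin n` (0-based) together with a bar indicator on each position. -/
structure SignedPerm (n : ℕ) where
  perm : Equiv.Perm (Fin n)
  bar : Fin n → Bool

/-- `b` avoids the patterns `21` and `2̄1̄`: there are no positions `i < j`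
with `b_i` and `b_j` both barred or both unbarred and `|b_i| > |b_j|`. -/
def AvoidsB {n : ℕ} (b : SignedPerm n) : Prop :=
  ∀ i j : Fin n, i < j → b.bar i = b.bar j → ¬ b.perm j < b.perm i

/-- The rank of the symbol in position `i` of `b` with respect to the total
order `1 < 2 < ⋯ < n < n̄ < ⋯ < 2̄ < 1̄` (0-based: an unbarred value `v` has
rank `v`, a barred value `v` has rank `2n - 1 - v`). -/
def symbKey {n : ℕ} (b : SignedPerm n) (i : Fin n) : ℕ :=
  if b.bar i then 2 * n - 1 - (b.perm i : ℕ) else (b.perm i : ℕ)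

/-- The descent set of a signed permutation, as a set of 1-based positions in
`[n]`: `i ∈ [n-1]` is a descent iff `b_i > b_{i+1}` in the order
`1 < ⋯ < n < n̄ < ⋯ < 1̄`, and `n` is a descent iff `b_n` is barred. -/
def DesB {n : ℕ} (b : SignedPerm n) : Set ℕ :=
  {i | (∃ h : 1 ≤ i ∧ i < n,
          symbKey b ⟨i, h.2⟩ <
            symbKey b ⟨i - 1, Nat.lt_of_le_of_lt (Nat.sub_le i 1) h.2⟩)
    ∨ (∃ h : 0 < n, i = n ∧ b.bar ⟨n - 1, Nat.sub_lt h Nat.one_pos⟩ = true)}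

section Aux2
variable {n : ℕ}

lemma hF_of_hT (f g : Fin n → Bool) (h : (bset g true).card = (bset f true).card) :
    (bset g false).card = (bset f false).card := by
  have h1 := bset_card_add f
  have h2 := bset_card_add g
  omega

noncomputable def avoidEquiv (n : ℕ) : {b : SignedPerm n // AvoidsB b} ≃
    {p : (Fin n → Bool) × (Fin n → Bool) //
      (bset p.1 true).card = (bset p.2 true).card} where
  toFun b := ⟨(b.1.bar, fun v => b.1.bar (b.1.perm.symm v)),
    (bset_card_eq _ _ b.1.perm (fun i => by simp) true).symm⟩
  invFun p := ⟨⟨permOf p.1.1 p.1.2 p.2.symm (hF_of_hT _ _ p.2.symm), p.1.1⟩, by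
    intro i j hij hbar
    exact lt_asymm (permOf_mono _ _ _ _ hij hbar)⟩
  left_inv b := by
    obtain ⟨⟨σ, f⟩, hb⟩ := b
    have key : ∀ (h1 : (bset (fun v => f (σ.symm v)) true).card = (bset f true).card)
        (h2 : (bset (fun v => f (σ.symm v)) false).card = (bset f false).card),
        permOf f (fun v => f (σ.symm v)) h1 h2 = σ := by
      intro h1 h2
      apply perm_uniq f (fun v => f (σ.symm v))
      · exact fun i => permOf_bool f (fun v => f (σ.symm v)) h1 h2 i
      · intro i; rw [Equiv.symm_apply_apply]
      · intro i j hij hf; exact permOf_mono _ _ _ _ hij hf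
      · intro i j hij hf
        have h1 := hb i j hij hf
        have h2 : σ i ≠ σ j := fun hc => (ne_of_lt hij) (σ.injective hc)
        exact lt_of_le_of_ne (not_lt.mp h1) h2
    apply Subtype.ext
    show SignedPerm.mk (permOf f (fun v => f (σ.symm v)) _ _) f = SignedPerm.mk σ f
    rw [key]
  right_inv p := by
    apply Subtype.ext
    apply Prod.ext
    · rfl
    · funext v
      have h := permOf_bool p.1.1 p.1.2 p.2.symm (hF_of_hT _ _ p.2.symm)
        ((permOf p.1.1 p.1.2 p.2.symm (hF_of_hT _ _ p.2.symm)).symm v)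
      rw [Equiv.apply_symm_apply] at h
      exact h.symm

def boolFinsetEquiv (n : ℕ) : (Fin n → Bool) ≃ Finset (Fin n) where
  toFun f := bset f true
  invFun s := fun i => decide (i ∈ s)
  left_inv f := by
    funext i
    by_cases h : f i = true <;> simp [bset, h]
  right_inv s := by
    ext i; simp [bset]

def sigmaEquiv (n : ℕ) :
    {q : Finset (Fin n) × Finset (Fin n) // q.1.card = q.2.card} ≃
    Σ k : Fin (n+1),
      {s : Finset (Fin n) // s.card = (k : ℕ)} × {s : Finset (Fin n) // s.card = (k : ℕ)} :=
  { toFun := fun q => ⟨⟨q.1.1.card,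
        Nat.lt_succ_of_le (le_trans (Finset.card_le_univ _) (by simp))⟩,
      ⟨q.1.1, rfl⟩, ⟨q.1.2, q.2.symm⟩⟩
    invFun := fun x => ⟨(x.2.1.1, x.2.2.1), x.2.1.2.trans x.2.2.2.symm⟩
    left_inv := fun q => rfl
    right_inv := fun x => by
      obtain ⟨⟨k, hk⟩, ⟨s, hs⟩, ⟨t, ht⟩⟩ := x
      dsimp at hs ht ⊢
      subst hs
      rfl }

noncomputable def countEquiv (n : ℕ) :
    {p : (Fin n → Bool) × (Fin n → Bool) //
      (bset p.1 true).card = (bset p.2 true).card} ≃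
    Σ k : Fin (n+1),
      {s : Finset (Fin n) // s.card = (k : ℕ)} × {s : Finset (Fin n) // s.card = (k : ℕ)} :=
  (Equiv.subtypeEquiv ((boolFinsetEquiv n).prodCongr (boolFinsetEquiv n))
    (fun p => Iff.rfl)).trans (sigmaEquiv n)

end Aux2

/-- The number of signed permutations of `[n]` avoiding `21` and `2̄1̄` is the
central binomial coefficient `C(2n, n)`. -/
theorem stmt12 (n : ℕ) (hn : 1 ≤ n) :
    Nat.card {b : SignedPerm n // AvoidsB b} = (2 * n).choose n := by
  rw [Nat.card_congr ((avoidEquiv n).trans (countEquiv n)), Nat.card_eq_fintype_card,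
    Fintype.card_sigma]
  simp only [Fintype.card_prod, Fintype.card_finset_len, Fintype.card_fin]
  rw [Fin.sum_univ_eq_sum_range (fun k => n.choose k * n.choose k),
    two_mul, Nat.add_choose_eq, Finset.Nat.sum_antidiagonal_eq_sum_range_succ_mk]
  apply Finset.sum_congr rfl
  intro k hk
  rw [Nat.choose_symm (Nat.lt_succ_iff.mp (Finset.mem_range.mp hk))]
end

section
/- Let n ≥ 1 and let b ∈ B_n(21, 2̄1̄), i.e., b is a signed permutation of [n] avoiding the patterns 21 and 2̄1̄. Then the descent set of b is exactly the set of positions occupied by barred symbols: Des(b) = {i ∈ [n] : b_i is barred}. -/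
lemma key_lt_iff {n : ℕ} (b : SignedPerm n) (hb : AvoidsB b) (p q : Fin n)
    (hpq : (p : ℕ) + 1 = (q : ℕ)) :
    symbKey b q < symbKey b p ↔ b.bar p = true := by
  have hlt : p < q := Fin.lt_def.mpr (by omega)
  have hp : (b.perm p : ℕ) < n := (b.perm p).isLt
  have hq : (b.perm q : ℕ) < n := (b.perm q).isLt
  have hne : (b.perm p : ℕ) ≠ (b.perm q : ℕ) := by
    intro h
    have := b.perm.injective (Fin.ext h)
    exact absurd (congrArg Fin.val this) (by omega)
  cases hbp : b.bar p <;> cases hbq : b.bar q <;>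
    simp only [symbKey, hbp, hbq, if_true, if_false, Bool.true_eq_false, Bool.false_eq_true,
      iff_true, iff_false, not_lt]
  · have := hb p q hlt (by rw [hbp, hbq])
    rw [Fin.lt_def] at this; omega
  · omega
  · omega
  · have := hb p q hlt (by rw [hbp, hbq])
    rw [Fin.lt_def] at this; omega

/-- If `b` avoids `21` and `2̄1̄`, then its descent set is exactly the set of
(1-based) positions occupied by barred symbols. -/
theorem stmt13 (n : ℕ) (hn : 1 ≤ n) (b : SignedPerm n) (hb : AvoidsB b) :
    DesB b =
      {i | ∃ h : 1 ≤ i ∧ i ≤ n,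
        b.bar ⟨i - 1, Nat.lt_of_lt_of_le (Nat.sub_lt h.1 Nat.one_pos) h.2⟩ = true} := by
  ext i
  simp only [DesB, Set.mem_setOf_eq]
  constructor
  · rintro (⟨⟨h1, h2⟩, hd⟩ | ⟨h0, rfl, hbar⟩)
    · refine ⟨⟨h1, le_of_lt h2⟩, ?_⟩
      exact (key_lt_iff b hb ⟨i - 1, by omega⟩ ⟨i, h2⟩ (by simp; omega)).mp hd
    · exact ⟨⟨hn, le_refl _⟩, hbar⟩
  · rintro ⟨⟨h1, h2⟩, hbar⟩
    rcases lt_or_eq_of_le h2 with h2' | rfl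
    · exact Or.inl ⟨⟨h1, h2'⟩,
        (key_lt_iff b hb ⟨i - 1, by omega⟩ ⟨i, h2'⟩ (by simp; omega)).mpr hbar⟩
    · exact Or.inr ⟨hn, rfl, hbar⟩
end

section
/- For every n ≥ 1, the map b ↦ (L(b), Des(b)) is a bijection from B_n(21, 2̄1̄) onto the set of ordered pairs (L, D) of subsets of [n] with |L| = |D|. -/
def Lset {n : ℕ} (b : SignedPerm n) : Set ℕ :=
  {v | ∃ i : Fin n, b.bar i = true ∧ (b.perm i : ℕ) + 1 = v}

lemma key_bar {n : ℕ} {b : SignedPerm n} {i : Fin n} (h : b.bar i = true) :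
    symbKey b i = 2 * n - 1 - (b.perm i : ℕ) := by simp [symbKey, h]

lemma key_unbar {n : ℕ} {b : SignedPerm n} {i : Fin n} (h : b.bar i = false) :
    symbKey b i = (b.perm i : ℕ) := by simp [symbKey, h]

lemma perm_lt {n : ℕ} {b : SignedPerm n} (hb : AvoidsB b) {i j : Fin n}
    (hij : i < j) (hbar : b.bar i = b.bar j) : b.perm i < b.perm j := by
  have h1 := hb i j hij hbar
  rcases lt_or_eq_of_le (not_lt.mp h1) with h | h
  · exact h
  · exact absurd (b.perm.injective h) (Fin.ne_of_lt hij)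

lemma desB_eq {n : ℕ} (b : SignedPerm n) (hb : AvoidsB b) :
    DesB b = (fun i : Fin n => (i : ℕ) + 1) '' {i : Fin n | b.bar i = true} := by
  ext m
  simp only [DesB, Set.mem_setOf_eq, Set.mem_image]
  constructor
  · rintro (⟨⟨h1, h2⟩, hkey⟩ | ⟨hpos, heq, hbar⟩)
    · refine ⟨⟨m - 1, Nat.lt_of_le_of_lt (Nat.sub_le m 1) h2⟩, ?_, by simp; omega⟩
      set i : Fin n := ⟨m, h2⟩
      set j : Fin n := ⟨m - 1, Nat.lt_of_le_of_lt (Nat.sub_le m 1) h2⟩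
      have hji : j < i := by simp only [Fin.mk_lt_mk, i, j]; omega
      by_contra hjf
      simp only [Bool.not_eq_true] at hjf
      have h1' : (b.perm i : ℕ) < n := (b.perm i).isLt
      have h2' : (b.perm j : ℕ) < n := (b.perm j).isLt
      cases hbi : b.bar i with
      | false =>
        rw [key_unbar hbi, key_unbar hjf] at hkey
        exact hb j i hji (by rw [hjf, hbi]) (Fin.lt_def.mpr hkey)
      | true =>
        rw [key_bar hbi, key_unbar hjf] at hkey
        omega
    · refine ⟨⟨n - 1, Nat.sub_lt hpos Nat.one_pos⟩, hbar, ?_⟩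
      simp only
      omega
  · rintro ⟨j, hbj, rfl⟩
    have hjn : (j : ℕ) < n := j.isLt
    rcases eq_or_lt_of_le (Nat.succ_le_of_lt hjn) with heq | hlt
    · right
      refine ⟨by omega, heq, ?_⟩
      have : (⟨n - 1, Nat.sub_lt (by omega) Nat.one_pos⟩ : Fin n) = j := by
        apply Fin.ext; simp; omega
      rw [this]; exact hbj
    · left
      refine ⟨⟨by omega, hlt⟩, ?_⟩
      set i : Fin n := ⟨(j : ℕ) + 1, hlt⟩
      have hjeq : (⟨(j : ℕ) + 1 - 1, Nat.lt_of_le_of_lt (Nat.sub_le _ 1) hlt⟩ : Fin n) = j := by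
        apply Fin.ext; simp
      rw [hjeq]
      have hji : j < i := by simp [Fin.lt_def, i]
      have h1' : (b.perm i : ℕ) < n := (b.perm i).isLt
      have h2' : (b.perm j : ℕ) < n := (b.perm j).isLt
      cases hbi : b.bar i with
      | false => rw [key_unbar hbi, key_bar hbj]; omega
      | true =>
        have hlt2 : (b.perm j : ℕ) < (b.perm i : ℕ) := perm_lt hb hji (by rw [hbj, hbi])
        rw [key_bar hbi, key_bar hbj]
        omega

lemma lset_eq {n : ℕ} (b : SignedPerm n) :
    Lset b = (fun v : Fin n => (v : ℕ) + 1) '' (b.perm '' {i : Fin n | b.bar i = true}) := by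
  ext v
  simp only [Lset, Set.mem_setOf_eq, Set.mem_image]
  constructor
  · rintro ⟨i, hi, hv⟩; exact ⟨b.perm i, ⟨i, hi, rfl⟩, hv⟩
  · rintro ⟨x, ⟨i, hi, rfl⟩, hv⟩; exact ⟨i, hi, hv⟩

lemma val_succ_inj {n : ℕ} : Function.Injective (fun v : Fin n => (v : ℕ) + 1) := by
  intro a b h
  simp only at h
  exact Fin.ext (by omega)

lemma mono_enum_unique {n : ℕ} {t : Finset (Fin n)} {f g : Fin n → Fin n}
    (hf : StrictMonoOn f ↑t) (hg : StrictMonoOn g ↑t)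
    (him : t.image f = t.image g) : ∀ x ∈ t, f x = g x := by
  set e := t.orderIsoOfFin rfl with he
  have hF : StrictMono (fun j : Fin t.card => f (e j)) := by
    intro a b hab
    exact hf (e a).2 (e b).2 (Subtype.coe_lt_coe.mpr (e.lt_iff_lt.mpr hab))
  have hG : StrictMono (fun j : Fin t.card => g (e j)) := by
    intro a b hab
    exact hg (e a).2 (e b).2 (Subtype.coe_lt_coe.mpr (e.lt_iff_lt.mpr hab))
  have hcf : (t.image f).card = t.card := Finset.card_image_of_injOn hf.injOn
  have hcg : (t.image g).card = t.card := Finset.card_image_of_injOn hg.injOn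
  have h1 := Finset.orderEmbOfFin_unique hcg
    (f := fun j : Fin t.card => f (e j))
    (fun j => him ▸ Finset.mem_image_of_mem f (e j).2) hF
  have h2 := Finset.orderEmbOfFin_unique hcg
    (f := fun j : Fin t.card => g (e j))
    (fun j => Finset.mem_image_of_mem g (e j).2) hG
  intro x hx
  have hex : e (e.symm ⟨x, hx⟩) = ⟨x, hx⟩ := e.apply_symm_apply _
  have := congrFun (h1.trans h2.symm) (e.symm ⟨x, hx⟩)
  simpa [hex] using this

lemma mem_desB_iff {n : ℕ} {b : SignedPerm n} (hb : AvoidsB b) (i : Fin n) :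
    ((i : ℕ) + 1 ∈ DesB b) ↔ b.bar i = true := by
  rw [desB_eq b hb]
  constructor
  · rintro ⟨j, hj, hji⟩
    have : j = i := Fin.ext (by simpa using hji)
    exact this ▸ hj
  · intro h; exact ⟨i, h, rfl⟩

lemma set_eq_image_filter {n : ℕ} {L : Set ℕ} [DecidablePred (· ∈ L)] (hL : L ⊆ Set.Icc 1 n) :
    L = (fun v : Fin n => (v : ℕ) + 1) ''
      ↑(Finset.univ.filter (fun v : Fin n => (v : ℕ) + 1 ∈ L)) := by
  ext x
  simp only [Set.mem_image, Finset.coe_filter, Finset.mem_univ, true_and, Set.mem_setOf_eq]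
  constructor
  · intro hx
    obtain ⟨h1, h2⟩ := hL hx
    refine ⟨⟨x - 1, by omega⟩, ?_, ?_⟩
    · show (x - 1) + 1 ∈ L
      have hxx : x - 1 + 1 = x := by omega
      rw [hxx]; exact hx
    · show (x - 1) + 1 = x; omega
  · rintro ⟨v, hv, rfl⟩; exact hv

/-- The map `b ↦ (L(b), Des(b))` is a bijection from the `(21, 2̄1̄)`-avoiding
signed permutations of `[n]` onto the set of ordered pairs `(L, D)` of
subsets of `[n]` with `|L| = |D|`. -/
theorem stmt14 (n : ℕ) (hn : 1 ≤ n) :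
    Set.BijOn (fun b : SignedPerm n => (Lset b, DesB b))
      {b : SignedPerm n | AvoidsB b}
      {LD : Set ℕ × Set ℕ |
        LD.1 ⊆ Set.Icc 1 n ∧ LD.2 ⊆ Set.Icc 1 n ∧ LD.1.ncard = LD.2.ncard} := by
  classical
  refine ⟨?_, ?_, ?_⟩
  · -- MapsTo
    intro b hb
    simp only [Set.mem_setOf_eq] at hb ⊢
    refine ⟨?_, ?_, ?_⟩
    · rintro v ⟨i, -, rfl⟩
      exact Set.mem_Icc.mpr ⟨by omega, (b.perm i).isLt⟩
    · rw [desB_eq b hb]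
      rintro v ⟨i, -, rfl⟩
      refine Set.mem_Icc.mpr ⟨?_, ?_⟩
      · show (1:ℕ) ≤ (i:ℕ) + 1
        omega
      · exact i.isLt
    · rw [lset_eq b, desB_eq b hb,
        Set.ncard_image_of_injective _ val_succ_inj,
        Set.ncard_image_of_injective _ val_succ_inj,
        Set.ncard_image_of_injective _ b.perm.injective]
  · -- InjOn
    intro b hb b' hb' heq
    simp only [Set.mem_setOf_eq] at hb hb'
    simp only [Prod.mk.injEq] at heq
    obtain ⟨hL, hD⟩ := heq
    have hbar : b.bar = b'.bar := by
      funext i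
      have h1 := (mem_desB_iff hb i).symm.trans (hD ▸ mem_desB_iff hb' i)
      exact Bool.eq_iff_iff.mpr h1
    have h1 : b.perm '' {i : Fin n | b.bar i = true} = b'.perm '' {i : Fin n | b.bar i = true} := by
      have h2 := hL
      rw [lset_eq, lset_eq] at h2
      have h3 := Set.image_injective.mpr (val_succ_inj (n := n)) h2
      rw [← hbar] at h3
      exact h3
    have key : ∀ c : Bool, ∀ x ∈ Finset.univ.filter (fun i : Fin n => b.bar i = c),
        b.perm x = b'.perm x := by
      intro c
      apply mono_enum_unique
      · intro x hx y hy hxy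
        simp only [Finset.coe_filter, Finset.mem_univ, true_and, Set.mem_setOf_eq] at hx hy
        exact perm_lt hb hxy (hx.trans hy.symm)
      · intro x hx y hy hxy
        simp only [Finset.coe_filter, Finset.mem_univ, true_and, Set.mem_setOf_eq] at hx hy
        exact perm_lt hb' hxy (by rw [← hbar, hx, hy])
      · rw [← Finset.coe_inj, Finset.coe_image, Finset.coe_image]
        have hset : (↑(Finset.univ.filter (fun i : Fin n => b.bar i = c)) : Set (Fin n))
            = {i : Fin n | b.bar i = c} := by ext x; simp
        rw [hset]
        cases c with
        | true => exact h1
        | false =>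
          have hcompl : {i : Fin n | b.bar i = false} = {i : Fin n | b.bar i = true}ᶜ := by
            ext x; simp
          rw [hcompl, Set.image_compl_eq b.perm.bijective,
            Set.image_compl_eq b'.perm.bijective, h1]
    have hperm : b.perm = b'.perm := by
      apply Equiv.ext
      intro i
      exact key (b.bar i) i (Finset.mem_filter.mpr ⟨Finset.mem_univ i, rfl⟩)
    obtain ⟨p, r⟩ := b
    obtain ⟨p', r'⟩ := b'
    simp only at hperm hbar
    rw [hperm, hbar]
  · -- SurjOn
    rintro ⟨L, D⟩ hLD
    obtain ⟨hL, hD, hcard⟩ := hLD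
    simp only at hL hD hcard
    set SL := Finset.univ.filter (fun v : Fin n => (v : ℕ) + 1 ∈ L) with hSLdef
    set SD := Finset.univ.filter (fun v : Fin n => (v : ℕ) + 1 ∈ D) with hSDdef
    have hLim : L = (fun v : Fin n => (v : ℕ) + 1) '' ↑SL := set_eq_image_filter hL
    have hDim : D = (fun v : Fin n => (v : ℕ) + 1) '' ↑SD := set_eq_image_filter hD
    have hLc : L.ncard = SL.card := by
      rw [hLim, Set.ncard_image_of_injective _ val_succ_inj, Set.ncard_coe_finset]
    have hDc : D.ncard = SD.card := by
      rw [hDim, Set.ncard_image_of_injective _ val_succ_inj, Set.ncard_coe_finset]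
    have hc : SL.card = SD.card := by omega
    have hcc : SLᶜ.card = SDᶜ.card := by
      rw [Finset.card_compl, Finset.card_compl, hc]
    set f : Fin n → Fin n := fun i =>
      if h : i ∈ SD then (SL.orderEmbOfFin hc) ((SD.orderIsoOfFin rfl).symm ⟨i, h⟩)
      else (SLᶜ.orderEmbOfFin hcc) ((SDᶜ.orderIsoOfFin rfl).symm ⟨i, Finset.mem_compl.mpr h⟩)
      with hfdef
    have hmemT : ∀ i, i ∈ SD → f i ∈ SL := by
      intro i h
      simp only [hfdef, dif_pos h]
      exact Finset.orderEmbOfFin_mem _ _ _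
    have hmemF : ∀ i, i ∉ SD → f i ∈ SLᶜ := by
      intro i h
      simp only [hfdef, dif_neg h]
      exact Finset.orderEmbOfFin_mem _ _ _
    have hinj : Function.Injective f := by
      intro i j hfeq
      by_cases hi : i ∈ SD <;> by_cases hj : j ∈ SD
      · simp only [hfdef, dif_pos hi, dif_pos hj] at hfeq
        have := (SD.orderIsoOfFin rfl).symm.injective
          ((SL.orderEmbOfFin hc).injective hfeq)
        simpa using congrArg Subtype.val this
      · exact absurd (hfeq ▸ hmemT i hi) (Finset.mem_compl.mp (hmemF j hj))
      · exact absurd (hfeq ▸ hmemF i hi) (by simpa using hmemT j hj)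
      · simp only [hfdef, dif_neg hi, dif_neg hj] at hfeq
        have := (SDᶜ.orderIsoOfFin rfl).symm.injective
          ((SLᶜ.orderEmbOfFin hcc).injective hfeq)
        simpa using congrArg Subtype.val this
    have hfmonoT : ∀ i j, i ∈ SD → j ∈ SD → i < j → f i < f j := by
      intro i j hi hj hij
      have h1 : (⟨i, hi⟩ : {x // x ∈ SD}) < ⟨j, hj⟩ := Subtype.mk_lt_mk.mpr hij
      have h2 := (SD.orderIsoOfFin rfl).symm.lt_iff_lt.mpr h1
      have h3 := (SL.orderEmbOfFin hc).strictMono h2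
      simpa only [hfdef, dif_pos hi, dif_pos hj] using h3
    have hfmonoF : ∀ i j, i ∉ SD → j ∉ SD → i < j → f i < f j := by
      intro i j hi hj hij
      have h1 : (⟨i, Finset.mem_compl.mpr hi⟩ : {x // x ∈ SDᶜ})
          < ⟨j, Finset.mem_compl.mpr hj⟩ := Subtype.mk_lt_mk.mpr hij
      have h2 := (SDᶜ.orderIsoOfFin rfl).symm.lt_iff_lt.mpr h1
      have h3 := (SLᶜ.orderEmbOfFin hcc).strictMono h2
      simpa only [hfdef, dif_neg hi, dif_neg hj] using h3
    set b : SignedPerm n :=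
      ⟨Equiv.ofBijective f (Finite.injective_iff_bijective.mp hinj),
        fun i => decide (i ∈ SD)⟩ with hbdef
    have hpf : ∀ i, b.perm i = f i := fun i => rfl
    have hAv : AvoidsB b := by
      intro i j hij hbarb
      have hbar' : (i ∈ SD) ↔ (j ∈ SD) := by
        simpa [hbdef, decide_eq_decide] using hbarb
      rw [hpf, hpf]
      by_cases hi : i ∈ SD
      · exact not_lt.mpr (hfmonoT i j hi (hbar'.mp hi) hij).le
      · exact not_lt.mpr (hfmonoF i j hi (fun h => hi (hbar'.mpr h)) hij).le
    have hbarT : {i : Fin n | b.bar i = true} = ↑SD := by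
      ext i; simp [hbdef]
    have himg : SD.image f = SL := by
      apply Finset.eq_of_subset_of_card_le
      · intro x hx
        obtain ⟨i, hi, rfl⟩ := Finset.mem_image.mp hx
        exact hmemT i hi
      · rw [Finset.card_image_of_injective _ hinj, hc]
    have hpermImg : b.perm '' {i : Fin n | b.bar i = true} = ↑SL := by
      rw [hbarT]
      change f '' ↑SD = ↑SL
      rw [← Finset.coe_image, himg]
    have hLeq : Lset b = L := by
      rw [lset_eq, hpermImg, ← hLim]
    have hDeq : DesB b = D := by
      rw [desB_eq b hAv, hbarT, ← hDim]
    exact ⟨b, hAv, by simp only [hLeq, hDeq]⟩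
end

section
/- For every n ≥ 1 there exists a bijection φ from B_n(21, 2̄1̄) onto itself such that Des(φ(b)) = [n] ∖ Des(b) for every b ∈ B_n(21, 2̄1̄). In particular, the poset P^B_n of elements of B_n(21, 2̄1̄) ordered by containment of descent sets is self-dual: Des(b) ⊆ Des(c) if and only if Des(φ(c)) ⊆ Des(φ(b)). -/
/-- For an avoiding signed permutation, `i` is a descent iff position `i-1`
(0-based) is barred. -/
lemma mem_DesB_iff {n : ℕ} (b : SignedPerm n) (hb : AvoidsB b) (i : ℕ) :
    i ∈ DesB b ↔ ∃ h : 1 ≤ i ∧ i ≤ n, b.bar ⟨i - 1, by omega⟩ = true := by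
  constructor
  · rintro (⟨h, hk⟩ | ⟨h, rfl, hbar⟩)
    · obtain ⟨h1, h2⟩ := id h
      refine ⟨⟨h1, h2.le⟩, ?_⟩
      have h1n : i - 1 < n := by omega
      set p : Fin n := ⟨i - 1, h1n⟩ with hp
      set q : Fin n := ⟨i, h2⟩ with hq
      have hk' : symbKey b q < symbKey b p := hk
      show b.bar p = true
      by_contra hfalse
      have hbp : b.bar p = false := by
        cases hbp : b.bar p
        · rfl
        · exact absurd hbp hfalse
      have hvp : (b.perm p : ℕ) < n := (b.perm p).isLt
      have hvq : (b.perm q : ℕ) < n := (b.perm q).isLt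
      have hpq : p < q := by
        rw [Fin.lt_def]; simp only [hp, hq]; omega
      cases hbq : b.bar q with
      | false =>
          have := hb p q hpq (by rw [hbp, hbq])
          rw [Fin.lt_def] at this
          simp only [symbKey, hbp, hbq, Bool.false_eq_true, if_false] at hk'
          omega
      | true =>
          simp only [symbKey, hbp, hbq, Bool.false_eq_true, if_false, if_true] at hk'
          omega
    · exact ⟨⟨h, le_refl _⟩, hbar⟩
  · rintro ⟨⟨h1, h2⟩, hbar⟩
    rcases eq_or_lt_of_le h2 with rfl | h2'
    · exact Or.inr ⟨by omega, rfl, hbar⟩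
    · refine Or.inl ⟨⟨h1, h2'⟩, ?_⟩
      have h1n : i - 1 < n := by omega
      set p : Fin n := ⟨i - 1, h1n⟩ with hp
      set q : Fin n := ⟨i, h2'⟩ with hq
      have hbp : b.bar p = true := hbar
      show symbKey b q < symbKey b p
      have hpq : p < q := by
        rw [Fin.lt_def]; simp only [hp, hq]; omega
      have hvp : (b.perm p : ℕ) < n := (b.perm p).isLt
      have hvq : (b.perm q : ℕ) < n := (b.perm q).isLt
      cases hbq : b.bar q with
      | false =>
          simp only [symbKey, hbq, hbp, Bool.false_eq_true, if_false, if_true]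
          omega
      | true =>
          have hle := hb p q hpq (by rw [hbp, hbq])
          rw [Fin.lt_def] at hle
          have hne' : (b.perm p : ℕ) ≠ (b.perm q : ℕ) := by
            intro hh
            have : b.perm p = b.perm q := Fin.val_injective hh
            have := b.perm.injective this
            rw [hp, hq] at this
            have := Fin.val_eq_val p q |>.mpr this
            simp only [hp, hq] at this
            omega
          simp only [symbKey, hbq, hbp, if_true]
          omega

/-- There is a bijection `φ` of the `(21, 2̄1̄)`-avoiding signed permutations
of `[n]` onto themselves with `Des (φ b) = [n] \ Des b` for all `b`; in
particular the poset `P^B_n` (ordered by containment of descent sets) is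
self-dual: `Des b ⊆ Des c ↔ Des (φ c) ⊆ Des (φ b)`. -/
theorem stmt16 (n : ℕ) (hn : 1 ≤ n) :
    ∃ φ : {b : SignedPerm n // AvoidsB b} ≃ {b : SignedPerm n // AvoidsB b},
      (∀ b, DesB (φ b).1 = Set.Icc 1 n \ DesB b.1) ∧
      (∀ b c : {b : SignedPerm n // AvoidsB b},
        DesB b.1 ⊆ DesB c.1 ↔ DesB (φ c).1 ⊆ DesB (φ b).1) := by
  have havoid : ∀ b : SignedPerm n, AvoidsB b →
      AvoidsB ⟨b.perm, fun i => !b.bar i⟩ := by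
    intro b hb i j hij heq
    exact hb i j hij (by simpa using heq)
  set f : {b : SignedPerm n // AvoidsB b} → {b : SignedPerm n // AvoidsB b} :=
    fun b => ⟨⟨b.1.perm, fun i => !b.1.bar i⟩, havoid _ b.2⟩ with hf
  have hinv : ∀ b, f (f b) = b := by
    rintro ⟨⟨p, e⟩, h⟩
    apply Subtype.ext
    simp [hf]
  set φ : {b : SignedPerm n // AvoidsB b} ≃ {b : SignedPerm n // AvoidsB b} :=
    { toFun := f, invFun := f, left_inv := hinv, right_inv := hinv } with hφ
  have hφb : ∀ b, (φ b).1 = ⟨b.1.perm, fun i => !b.1.bar i⟩ := fun b => rfl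
  have hdes : ∀ b : {b : SignedPerm n // AvoidsB b},
      DesB (φ b).1 = Set.Icc 1 n \ DesB b.1 := by
    intro b
    ext i
    simp only [Set.mem_diff, Set.mem_Icc]
    rw [show (i ∈ DesB (φ b).1) ↔ _ from mem_DesB_iff _ (φ b).2 i,
        show (i ∈ DesB b.1) ↔ _ from mem_DesB_iff _ b.2 i]
    simp only [hφb, Bool.not_eq_true']
    constructor
    · rintro ⟨⟨h1, h2⟩, hbar⟩
      exact ⟨⟨h1, h2⟩, fun ⟨_, hb'⟩ => by rw [hbar] at hb'; exact Bool.false_ne_true hb'⟩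
    · rintro ⟨⟨h1, h2⟩, hnot⟩
      refine ⟨⟨h1, h2⟩, ?_⟩
      cases hb : b.1.bar ⟨i - 1, by omega⟩
      · rfl
      · exact absurd ⟨⟨h1, h2⟩, hb⟩ hnot
  have hsub : ∀ b : {b : SignedPerm n // AvoidsB b}, DesB b.1 ⊆ Set.Icc 1 n := by
    intro b i hi
    rw [mem_DesB_iff _ b.2 i] at hi
    obtain ⟨⟨h1, h2⟩, _⟩ := hi
    exact Set.mem_Icc.mpr ⟨h1, h2⟩
  refine ⟨φ, hdes, fun b c => ?_⟩
  rw [hdes b, hdes c]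
  constructor
  · intro h x hx
    exact ⟨hx.1, fun hxb => hx.2 (h hxb)⟩
  · intro h x hx
    by_contra hxc
    exact (h ⟨hsub b hx, hxc⟩).2 hx
end
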